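/- Let H be an r-graph with at least one edge such that the intersection of all edges of H is empty. There exists a constant c > 0 such that for any p = p(n) ∈ (0,1] with p(n)·n^{r−1} → ∞ as n → ∞, asymptotically almost surely ex(G^r_{n,p}, H) ≥ c·p·n^{r−1}. -/

import Mathlib

open Finset Filter

namespace Paper

/-- An `r`-graph: every edge has size `r`. -/
def IsUniform {V : Type*} (H : Finset (Finset V)) (r : ℕ) : Prop :=
  ∀ e ∈ H, e.card = r

/-- The set of vertices covered by the edges of `H`. -/
def verts {V : Type*} [DecidableEq V] (H : Finset (Finset V)) : Finset V :=
  H.sup id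

/-- `c` is a copy of `F`: the image of `F` under a map injective on the vertices of `F`. -/
def IsCopyOf {V W : Type*} [DecidableEq V] [DecidableEq W]
    (c : Finset (Finset W)) (F : Finset (Finset V)) : Prop :=
  ∃ f : V → W, Set.InjOn f ↑(verts F) ∧ c = F.image (fun e => e.image f)

/-- `H` contains a copy of `F`. -/
def ContainsCopy {V W : Type*} [DecidableEq V] [DecidableEq W]
    (H : Finset (Finset W)) (F : Finset (Finset V)) : Prop :=
  ∃ c, c ⊆ H ∧ IsCopyOf c F

open Classical in
/-- The Turán number: maximum number of edges of a subgraph of `G` with no copy of `F`. -/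
noncomputable def exNum {V W : Type*} [DecidableEq V] [DecidableEq W]
    (G : Finset (Finset V)) (F : Finset (Finset W)) : ℕ :=
  (G.powerset.filter (fun G' => ¬ ContainsCopy G' F)).sup Finset.card

/-- All possible edges of the complete `r`-graph on `Fin n`. -/
def allEdges (n r : ℕ) : Finset (Finset (Fin n)) :=
  Finset.powersetCard r Finset.univ

open Classical in
/-- Probability, under the Erdős–Rényi random `r`-graph `G^r_{n,p}`, of the event `A`. -/
noncomputable def prob (n r : ℕ) (p : ℝ) (A : Set (Finset (Finset (Fin n)))) : ℝ :=
  ∑ G ∈ (allEdges n r).powerset,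
    if G ∈ A then p ^ G.card * (1 - p) ^ ((allEdges n r).card - G.card) else 0

/-- `m(H)`, the `r`-density of `H`. -/
noncomputable def mDensity {V : Type*} [DecidableEq V] (r : ℕ) (H : Finset (Finset V)) : ℝ :=
  sSup {x : ℝ | ∃ G : Finset (Finset V), G ⊆ H ∧ 2 ≤ G.card ∧
    x = ((G.card : ℝ) - 1) / (((verts G).card : ℝ) - (r : ℝ))}

/-- `s(H) = 1/m(H)`. -/
noncomputable def sDensity {V : Type*} [DecidableEq V] (r : ℕ) (H : Finset (Finset V)) : ℝ :=
  1 / mDensity r H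

/-- A tight `k`-tree. -/
def IsTightTree {V : Type*} [DecidableEq V] (k : ℕ) (T : Finset (Finset V)) : Prop :=
  IsUniform T k ∧ ∃ (t : ℕ) (e : Fin t → Finset V), Function.Injective e ∧
    T = Finset.image e Finset.univ ∧
    ∀ i : Fin t, 0 < (i : ℕ) →
      ∃ v ∈ e i, ∃ s : Fin t, (s : ℕ) < (i : ℕ) ∧
        (∀ j : Fin t, (j : ℕ) < (i : ℕ) → v ∉ e j) ∧ e i \ {v} ⊆ e s

/-- The `r`-expansion of a hypergraph `S`: each edge `e` is enlarged with `r - |e|`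
new vertices of degree one, distinct new vertices for distinct edges. -/
def expansion {V : Type*} [DecidableEq V] (r : ℕ) (S : Finset (Finset V)) :
    Finset (Finset (V ⊕ Finset V × ℕ)) :=
  S.image (fun e =>
    e.image Sum.inl ∪ (Finset.range (r - e.card)).image (fun i => Sum.inr (e, i)))

/-- The codegree `d_H(σ)`: number of edges of `H` containing `σ`. -/
def degOf {V : Type*} [DecidableEq V] (H : Finset (Finset V)) (σ : Finset V) : ℕ :=
  (H.filter (fun e => σ ⊆ e)).card

/-- `Δ_j(S)`: the maximum over sets `J` of `j` edges of `H` of the number of members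
of the collection `S` containing all edges of `J`. -/
def maxDeg {V : Type*} [DecidableEq V] (H : Finset (Finset V))
    (S : Finset (Finset (Finset V))) (j : ℕ) : ℕ :=
  (Finset.powersetCard j H).sup (fun J => (S.filter (fun c => J ⊆ c)).card)

/-- The complete `k`-graph on `m` vertices. -/
def completeHypergraph (m k : ℕ) : Finset (Finset (Fin m)) :=
  Finset.powersetCard k Finset.univ

/-- The `r`-uniform linear cycle of length `m`. -/
def linearCycle (r m : ℕ) : Finset (Finset (ZMod (m * (r - 1)))) :=
  (Finset.range m).image (fun i =>
    (Finset.range r).image (fun j => ((i * (r - 1) + j : ℕ) : ZMod (m * (r - 1)))))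

open Classical in
/-- The `r`-graph whose edges are the vertex sets of the `r`-cliques of `G`. -/
noncomputable def cliqueEdges {V : Type*} [Fintype V] (G : SimpleGraph V) (r : ℕ) :
    Finset (Finset V) :=
  Finset.univ.filter (fun s => G.IsNClique r s)


/- ## Auxiliary lemmas -/


lemma sum_W (p : ℝ) {α : Type*} [DecidableEq α] (s : Finset α) :
    ∑ A ∈ s.powerset, p ^ A.card * (1 - p) ^ (s.card - A.card) = 1 := by
  have h := Finset.prod_add (fun _ : α => p) (fun _ : α => 1 - p) s
  simp only [Finset.prod_const] at h
  rw [show p + (1 - p) = 1 by ring, one_pow] at h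
  calc ∑ A ∈ s.powerset, p ^ A.card * (1 - p) ^ (s.card - A.card)
      = ∑ A ∈ s.powerset, p ^ A.card * (1 - p) ^ (s \ A).card := by
        apply Finset.sum_congr rfl
        intro A hA
        rw [Finset.card_sdiff_of_subset (Finset.mem_powerset.mp hA)]
    _ = 1 := h.symm

lemma sum_subset_W (p : ℝ) {α : Type*} [DecidableEq α] (u : Finset α) :
    ∀ s : Finset α, u ⊆ s →
    ∑ A ∈ s.powerset, (if u ⊆ A then p ^ A.card * (1 - p) ^ (s.card - A.card) else 0)
      = p ^ u.card := by
  induction u using Finset.induction with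
  | empty =>
    intro s _
    simp only [Finset.empty_subset, if_true, Finset.card_empty, pow_zero]
    exact sum_W p s
  | @insert x u hx ih =>
    intro s hu
    have hxs : x ∈ s := hu (Finset.mem_insert_self x u)
    have hus : u ⊆ s.erase x := Finset.subset_erase.mpr
      ⟨(Finset.insert_subset_iff.mp hu).2, hx⟩
    rw [← Finset.sum_filter]
    have key : ∑ A ∈ s.powerset.filter (fun A => insert x u ⊆ A),
        p ^ A.card * (1 - p) ^ (s.card - A.card)
        = ∑ B ∈ (s.erase x).powerset.filter (fun B => u ⊆ B),
            p * (p ^ B.card * (1 - p) ^ ((s.erase x).card - B.card)) := by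
      apply Finset.sum_bij' (fun A _ => Finset.erase A x) (fun B _ => insert x B)
      · intro A hA
        simp only [Finset.mem_filter, Finset.mem_powerset] at hA ⊢
        exact ⟨Finset.erase_subset_erase x hA.1,
          Finset.subset_erase.mpr ⟨(Finset.insert_subset_iff.mp hA.2).2, hx⟩⟩
      · intro B hB
        simp only [Finset.mem_filter, Finset.mem_powerset] at hB ⊢
        constructor
        · exact Finset.insert_subset hxs (hB.1.trans (Finset.erase_subset x s))
        · exact Finset.insert_subset_insert x hB.2
      · intro A hA
        simp only [Finset.mem_filter, Finset.mem_powerset] at hA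
        exact Finset.insert_erase (hA.2 (Finset.mem_insert_self x u))
      · intro B hB
        simp only [Finset.mem_filter, Finset.mem_powerset] at hB
        exact Finset.erase_insert (fun hxB => (Finset.mem_erase.mp (hB.1 hxB)).1 rfl)
      · intro A hA
        simp only [Finset.mem_filter, Finset.mem_powerset] at hA
        have hxA : x ∈ A := hA.2 (Finset.mem_insert_self x u)
        have hAc : A.card = (A.erase x).card + 1 := by
          rw [Finset.card_erase_of_mem hxA]
          have : 1 ≤ A.card := Finset.card_pos.mpr ⟨x, hxA⟩
          omega
        have hsc : s.card = (s.erase x).card + 1 := by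
          rw [Finset.card_erase_of_mem hxs]
          have : 1 ≤ s.card := Finset.card_pos.mpr ⟨x, hxs⟩
          omega
        rw [hAc, hsc]
        have : (s.erase x).card + 1 - ((A.erase x).card + 1)
            = (s.erase x).card - (A.erase x).card := by omega
        rw [this]
        ring
    rw [key, ← Finset.mul_sum, Finset.sum_filter, ih _ hus, Finset.card_insert_of_notMem hx]
    ring

lemma indicator_card {α : Type*} [DecidableEq α] (T A : Finset α) :
    ((A ∩ T).card : ℝ) = ∑ x ∈ T, (if x ∈ A then (1:ℝ) else 0) := by
  rw [Finset.inter_comm, ← Finset.filter_mem_eq_inter, Finset.card_filter]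
  push_cast
  rfl

lemma mean_W (p : ℝ) {α : Type*} [DecidableEq α] (s T : Finset α) (hT : T ⊆ s) :
    ∑ A ∈ s.powerset, (p ^ A.card * (1 - p) ^ (s.card - A.card)) * ((A ∩ T).card : ℝ)
      = (T.card : ℝ) * p := by
  have h1 : ∀ A : Finset α,
      (p ^ A.card * (1 - p) ^ (s.card - A.card)) * ((A ∩ T).card : ℝ)
      = ∑ x ∈ T, (if ({x} : Finset α) ⊆ A
          then p ^ A.card * (1 - p) ^ (s.card - A.card) else 0) := by
    intro A
    rw [indicator_card, Finset.mul_sum]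
    apply Finset.sum_congr rfl
    intro x _
    simp [Finset.singleton_subset_iff]
  simp only [h1]
  rw [Finset.sum_comm]
  have h2 : ∀ x ∈ T, ∑ A ∈ s.powerset, (if ({x} : Finset α) ⊆ A
      then p ^ A.card * (1 - p) ^ (s.card - A.card) else 0) = p := by
    intro x hx
    rw [sum_subset_W p {x} s (Finset.singleton_subset_iff.mpr (hT hx))]
    simp
  rw [Finset.sum_congr rfl h2, Finset.sum_const, nsmul_eq_mul]

lemma sq_W (p : ℝ) {α : Type*} [DecidableEq α] (s T : Finset α) (hT : T ⊆ s) :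
    ∑ A ∈ s.powerset, (p ^ A.card * (1 - p) ^ (s.card - A.card)) * ((A ∩ T).card : ℝ) ^ 2
      = (T.card : ℝ) * p + (T.card : ℝ) * ((T.card : ℝ) - 1) * p ^ 2 := by
  have h1 : ∀ A : Finset α,
      (p ^ A.card * (1 - p) ^ (s.card - A.card)) * ((A ∩ T).card : ℝ) ^ 2
      = ∑ x ∈ T, ∑ y ∈ T, (if ({x, y} : Finset α) ⊆ A
          then p ^ A.card * (1 - p) ^ (s.card - A.card) else 0) := by
    intro A
    rw [indicator_card, sq, Finset.sum_mul_sum, Finset.mul_sum]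
    apply Finset.sum_congr rfl
    intro x _
    rw [Finset.mul_sum]
    apply Finset.sum_congr rfl
    intro y _
    by_cases hx : x ∈ A <;> by_cases hy : y ∈ A <;>
      simp [hx, hy, Finset.insert_subset_iff]
  simp only [h1]
  rw [Finset.sum_comm]
  have h2 : ∀ x ∈ T, ∑ A ∈ s.powerset, ∑ y ∈ T, (if ({x, y} : Finset α) ⊆ A
      then p ^ A.card * (1 - p) ^ (s.card - A.card) else 0)
      = (T.card : ℝ) * p ^ 2 + (p - p ^ 2) := by
    intro x hx
    rw [Finset.sum_comm]
    have h3 : ∀ y ∈ T, ∑ A ∈ s.powerset, (if ({x, y} : Finset α) ⊆ A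
        then p ^ A.card * (1 - p) ^ (s.card - A.card) else 0)
        = p ^ 2 + (if x = y then p - p ^ 2 else 0) := by
      intro y hy
      rw [sum_subset_W p {x, y} s (by
        rw [Finset.insert_subset_iff, Finset.singleton_subset_iff]
        exact ⟨hT hx, hT hy⟩)]
      by_cases hxy : x = y
      · subst hxy
        simp only [Finset.pair_eq_singleton, Finset.card_singleton, pow_one, if_true,
          eq_self_iff_true]
        ring
      · rw [Finset.card_pair hxy]
        simp [hxy]
    rw [Finset.sum_congr rfl h3, Finset.sum_add_distrib, Finset.sum_const, nsmul_eq_mul,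
      Finset.sum_ite_eq T x (fun _ => p - p ^ 2), if_pos hx]
  rw [Finset.sum_congr rfl h2, Finset.sum_const, nsmul_eq_mul]
  ring

lemma var_W (p : ℝ) {α : Type*} [DecidableEq α] (s T : Finset α) (hT : T ⊆ s) :
    ∑ A ∈ s.powerset, (p ^ A.card * (1 - p) ^ (s.card - A.card))
        * (((A ∩ T).card : ℝ) - (T.card : ℝ) * p) ^ 2
      = (T.card : ℝ) * p * (1 - p) := by
  have e : ∀ A : Finset α,
      (p ^ A.card * (1 - p) ^ (s.card - A.card)) * (((A ∩ T).card : ℝ) - (T.card : ℝ) * p) ^ 2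
      = (p ^ A.card * (1 - p) ^ (s.card - A.card)) * ((A ∩ T).card : ℝ) ^ 2
        - (2 * ((T.card : ℝ) * p)) * ((p ^ A.card * (1 - p) ^ (s.card - A.card)) * ((A ∩ T).card : ℝ))
        + ((T.card : ℝ) * p) ^ 2 * (p ^ A.card * (1 - p) ^ (s.card - A.card)) := by
    intro A; ring
  simp only [e]
  rw [Finset.sum_add_distrib, Finset.sum_sub_distrib, ← Finset.mul_sum, ← Finset.mul_sum,
    sq_W p s T hT, mean_W p s T hT, sum_W p s]
  ring

lemma cheb_W (p : ℝ) (hp0 : 0 < p) (hp1 : p ≤ 1) {α : Type*} [DecidableEq α]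
    (s T : Finset α) (hT : T ⊆ s) (hN : 0 < T.card) (t : ℝ)
    (ht : t ≤ (T.card : ℝ) * p / 2) :
    ∑ A ∈ s.powerset, (if ((A ∩ T).card : ℝ) < t
        then p ^ A.card * (1 - p) ^ (s.card - A.card) else 0)
      ≤ 4 / ((T.card : ℝ) * p) := by
  have hq : (0:ℝ) ≤ 1 - p := by linarith
  have hNr : (0:ℝ) < (T.card : ℝ) := by exact_mod_cast hN
  have hNp : (0:ℝ) < (T.card : ℝ) * p := mul_pos hNr hp0
  set N := (T.card : ℝ) with hNdef
  have key : (∑ A ∈ s.powerset, (if ((A ∩ T).card : ℝ) < t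
        then p ^ A.card * (1 - p) ^ (s.card - A.card) else 0)) * (N * p / 2) ^ 2
      ≤ N * p * (1 - p) := by
    rw [← var_W p s T hT, Finset.sum_mul]
    apply Finset.sum_le_sum
    intro A _
    have hw : (0:ℝ) ≤ p ^ A.card * (1 - p) ^ (s.card - A.card) := by positivity
    by_cases h : ((A ∩ T).card : ℝ) < t
    · rw [if_pos h]
      apply mul_le_mul_of_nonneg_left _ hw
      have h1 : N * p / 2 ≤ N * p - ((A ∩ T).card : ℝ) := by linarith
      have h2 : (0:ℝ) ≤ N * p / 2 := by linarith
      calc (N * p / 2) ^ 2 ≤ (N * p - ((A ∩ T).card : ℝ)) ^ 2 :=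
            pow_le_pow_left₀ h2 h1 2
        _ = (((A ∩ T).card : ℝ) - N * p) ^ 2 := by ring
    · rw [if_neg h, zero_mul]
      positivity
  have hsq : (0:ℝ) < (N * p / 2) ^ 2 := by positivity
  rw [← le_div_iff₀ hsq] at key
  refine key.trans ?_
  rw [div_le_div_iff₀ hsq hNp]
  nlinarith [sq_nonneg (N * p), mul_pos hNp hNp]

/- ## Deterministic lemmas -/

lemma star_le_exNum {V : Type} [DecidableEq V] {H : Finset (Finset V)}
    (hne : H.Nonempty) (hint : ∀ v : V, ∃ e ∈ H, v ∉ e)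
    {W : Type} [DecidableEq W] (w : W) (G : Finset (Finset W)) :
    (G.filter (fun e => w ∈ e)).card ≤ exNum G H := by
  classical
  set star := G.filter (fun e => w ∈ e) with hstar
  have hfree : ¬ ContainsCopy star H := by
    rintro ⟨c, hc, f, hf, rfl⟩
    have h0 : ∀ e ∈ H, ∃ v ∈ e, f v = w := by
      intro e he
      have hmem : e.image f ∈ star := hc (Finset.mem_image_of_mem _ he)
      have hw : w ∈ e.image f := by
        rw [hstar, Finset.mem_filter] at hmem
        exact hmem.2
      simpa using Finset.mem_image.mp hw
    obtain ⟨e₀, he₀⟩ := hne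
    obtain ⟨v₀, hv₀, hfv₀⟩ := h0 e₀ he₀
    have hall : ∀ e ∈ H, v₀ ∈ e := by
      intro e he
      obtain ⟨v, hv, hfv⟩ := h0 e he
      have hv' : v ∈ verts H := Finset.mem_sup.mpr ⟨e, he, hv⟩
      have hv₀' : v₀ ∈ verts H := Finset.mem_sup.mpr ⟨e₀, he₀, hv₀⟩
      have := hf hv' hv₀' (hfv.trans hfv₀.symm)
      exact this ▸ hv
    obtain ⟨e, he, hv⟩ := hint v₀
    exact hv (hall e he)
  apply Finset.le_sup (f := Finset.card)
  rw [Finset.mem_filter, Finset.mem_powerset]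
  exact ⟨Finset.filter_subset _ _, hfree⟩

lemma pow_le_descFactorial' (m : ℕ) : ∀ k : ℕ, (m + 1 - k) ^ k ≤ m.descFactorial k
  | 0 => le_refl 1
  | (k+1) => by
    rw [Nat.descFactorial_succ, pow_succ]
    have h1 : (m + 1 - (k+1)) ^ k ≤ (m + 1 - k) ^ k :=
      Nat.pow_le_pow_left (by omega) k
    calc (m + 1 - (k+1)) ^ k * (m + 1 - (k+1))
        ≤ (m + 1 - k) ^ k * (m - k) := Nat.mul_le_mul h1 (by omega)
      _ ≤ m.descFactorial k * (m - k) :=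
          Nat.mul_le_mul_right _ (pow_le_descFactorial' m k)
      _ = (m - k) * m.descFactorial k := Nat.mul_comm _ _

lemma pow_le_choose' (k n : ℕ) (h : 2 * k + 1 ≤ n) :
    n ^ k ≤ 2 ^ k * k.factorial * (n - 1).choose k := by
  have h1 : n ^ k ≤ (2 * (n - k)) ^ k := Nat.pow_le_pow_left (by omega) k
  have h2 : (n - k) ^ k ≤ (n - 1).descFactorial k := by
    have he : n - 1 + 1 - k = n - k := by omega
    exact he ▸ pow_le_descFactorial' (n - 1) k
  calc n ^ k ≤ (2 * (n - k)) ^ k := h1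
    _ = 2 ^ k * (n - k) ^ k := Nat.mul_pow 2 (n - k) k
    _ ≤ 2 ^ k * (n - 1).descFactorial k := Nat.mul_le_mul_left _ h2
    _ = 2 ^ k * (k.factorial * (n - 1).choose k) := by
        rw [Nat.descFactorial_eq_factorial_mul_choose]
    _ = 2 ^ k * k.factorial * (n - 1).choose k := (Nat.mul_assoc _ _ _).symm

lemma choose_le_star_card (n r : ℕ) (hr : 1 ≤ r) (hn : 1 ≤ n) :
    (n - 1).choose (r - 1) ≤
      ((Finset.powersetCard r (Finset.univ : Finset (Fin n))).filter
        (fun e => (⟨0, hn⟩ : Fin n) ∈ e)).card := by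
  set z : Fin n := ⟨0, hn⟩
  have := Finset.card_le_card_of_injOn (f := fun s => insert z s)
    (s := Finset.powersetCard (r-1) (Finset.univ.erase z))
    (t := (Finset.powersetCard r (Finset.univ : Finset (Fin n))).filter (fun e => z ∈ e))
    ?_ ?_
  · calc (n-1).choose (r-1)
        = (Finset.powersetCard (r-1) ((Finset.univ : Finset (Fin n)).erase z)).card := by
          rw [Finset.card_powersetCard, Finset.card_erase_of_mem (Finset.mem_univ z),
            Finset.card_univ, Fintype.card_fin]
      _ ≤ _ := this
  · intro s hs
    rw [Finset.mem_coe, Finset.mem_powersetCard] at hs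
    have hzs : z ∉ s := fun h => (Finset.mem_erase.mp (hs.1 h)).1 rfl
    rw [Finset.mem_coe, Finset.mem_filter, Finset.mem_powersetCard]
    refine ⟨⟨Finset.subset_univ _, ?_⟩, Finset.mem_insert_self z s⟩
    rw [Finset.card_insert_of_notMem hzs, hs.2]
    omega
  · intro s hs t ht hst
    rw [Finset.mem_coe, Finset.mem_powersetCard] at hs ht
    have hzs : z ∉ s := fun h => (Finset.mem_erase.mp (hs.1 h)).1 rfl
    have hzt : z ∉ t := fun h => (Finset.mem_erase.mp (ht.1 h)).1 rfl
    have := congrArg (fun u => Finset.erase u z) hst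
    simpa [Finset.erase_insert hzs, Finset.erase_insert hzt] using this


theorem statement_11 {V : Type} [DecidableEq V] (r : ℕ) (H : Finset (Finset V))
    (hH : IsUniform H r) (hne : H.Nonempty) (hint : ∀ v : V, ∃ e ∈ H, v ∉ e) :
    ∃ c : ℝ, 0 < c ∧ ∀ p : ℕ → ℝ, (∀ n, 0 < p n ∧ p n ≤ 1) →
      Tendsto (fun n : ℕ => p n * (n : ℝ) ^ (r - 1)) atTop atTop →
      Tendsto (fun n : ℕ => prob n r (p n)
        {G | c * p n * (n : ℝ) ^ (r - 1) ≤ (exNum G H : ℝ)})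
        atTop (nhds 1) := by
  classical
  set K : ℕ := 2 ^ (r - 1) * (r - 1).factorial with hKdef
  have hKpos : (0:ℝ) < (K : ℝ) := by
    have : 0 < K := Nat.mul_pos (Nat.pow_pos (by norm_num)) (Nat.factorial_pos _)
    exact_mod_cast this
  refine ⟨1 / (2 * (K : ℝ)), by positivity, ?_⟩
  intro p hp hT
  by_cases hr : r ≤ 1
  · exfalso
    have hr1 : r - 1 = 0 := by omega
    rw [hr1] at hT
    simp only [pow_zero, mul_one] at hT
    obtain ⟨n, hn⟩ := (hT.eventually_ge_atTop 2).exists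
    linarith [(hp n).2]
  push_neg at hr
  set N₀ : ℕ → ℝ := fun n => (((n - 1).choose (r - 1) : ℕ) : ℝ) with hN₀
  have hcast : ∀ᶠ n : ℕ in atTop, (n : ℝ) ^ (r - 1) ≤ (K : ℝ) * N₀ n := by
    filter_upwards [eventually_ge_atTop (2 * (r - 1) + 1)] with n hn
    have h := pow_le_choose' (r - 1) n hn
    have : ((n ^ (r-1) : ℕ) : ℝ) ≤ ((K * (n-1).choose (r-1) : ℕ) : ℝ) := by
      exact_mod_cast h
    push_cast at this
    convert this using 2 <;> simp [hN₀]
  have hN₀pos : ∀ᶠ n : ℕ in atTop, 0 < N₀ n := by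
    filter_upwards [eventually_ge_atTop r] with n hn
    have : 0 < (n - 1).choose (r - 1) := Nat.choose_pos (by omega)
    simp only [hN₀]
    exact_mod_cast this
  have hNp : Tendsto (fun n => N₀ n * p n) atTop atTop := by
    apply tendsto_atTop_mono' atTop ?_ (hT.atTop_div_const hKpos)
    filter_upwards [hcast] with n hn
    have hp0 := (hp n).1
    rw [div_le_iff₀ hKpos]
    nlinarith [mul_le_mul_of_nonneg_left hn hp0.le]
  have hlim : Tendsto (fun n : ℕ => 1 - 4 / (N₀ n * p n)) atTop (nhds 1) := by
    have h0 : Tendsto (fun n : ℕ => 4 / (N₀ n * p n)) atTop (nhds 0) :=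
      Filter.Tendsto.const_div_atTop hNp 4
    have h1 : Tendsto (fun _ : ℕ => (1:ℝ)) atTop (nhds 1) := tendsto_const_nhds
    have := h1.sub h0
    simpa using this
  -- upper bound: prob ≤ 1
  have hub : ∀ n : ℕ, prob n r (p n)
      {G | 1 / (2 * (K:ℝ)) * p n * (n : ℝ) ^ (r - 1) ≤ (exNum G H : ℝ)} ≤ 1 := by
    intro n
    obtain ⟨hp0, hp1⟩ := hp n
    rw [prob]
    calc ∑ G ∈ (allEdges n r).powerset, _ ≤ ∑ G ∈ (allEdges n r).powerset,
          p n ^ G.card * (1 - p n) ^ ((allEdges n r).card - G.card) := by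
          apply Finset.sum_le_sum
          intro G _
          split_ifs
          · exact le_rfl
          · exact mul_nonneg (pow_nonneg hp0.le _) (pow_nonneg (by linarith) _)
      _ = 1 := sum_W (p n) (allEdges n r)
  -- lower bound eventually
  have hlb : ∀ᶠ n : ℕ in atTop, 1 - 4 / (N₀ n * p n) ≤ prob n r (p n)
      {G | 1 / (2 * (K:ℝ)) * p n * (n : ℝ) ^ (r - 1) ≤ (exNum G H : ℝ)} := by
    filter_upwards [eventually_ge_atTop (2 * (r - 1) + 1), eventually_ge_atTop 1,
      eventually_ge_atTop r, hcast, hN₀pos] with n hn2 hn1 hnr hcn hN0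
    obtain ⟨hp0, hp1⟩ := hp n
    set z : Fin n := ⟨0, hn1⟩ with hz
    set M := allEdges n r with hM
    set T := M.filter (fun e => z ∈ e) with hTdef
    have hTsub : T ⊆ M := Finset.filter_subset _ _
    have hcard : (n - 1).choose (r - 1) ≤ T.card := choose_le_star_card n r (by omega) hn1
    have hTpos : 0 < T.card := by
      have : 0 < (n - 1).choose (r - 1) := Nat.choose_pos (by omega)
      omega
    have hN₀T : N₀ n ≤ (T.card : ℝ) := by
      simp only [hN₀]
      exact_mod_cast hcard
    have hTr : (0:ℝ) < (T.card : ℝ) := by exact_mod_cast hTpos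
    have hTp : (0:ℝ) < (T.card : ℝ) * p n := mul_pos hTr hp0
    have hNpn : (0:ℝ) < N₀ n * p n := mul_pos hN0 hp0
    set t : ℝ := 1 / (2 * (K:ℝ)) * p n * (n : ℝ) ^ (r - 1) with htdef
    have ht : t ≤ (T.card : ℝ) * p n / 2 := by
      have h1 : (n : ℝ) ^ (r - 1) ≤ (K : ℝ) * (T.card : ℝ) := by
        refine hcn.trans ?_
        exact mul_le_mul_of_nonneg_left hN₀T hKpos.le
      have h2 : p n * (n : ℝ) ^ (r - 1) ≤ p n * ((K:ℝ) * (T.card : ℝ)) :=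
        mul_le_mul_of_nonneg_left h1 hp0.le
      have h3 : t = p n * (n : ℝ) ^ (r - 1) / (2 * (K:ℝ)) := by rw [htdef]; ring
      rw [h3, div_le_iff₀ (by positivity : (0:ℝ) < 2 * (K:ℝ))]
      nlinarith
    -- star bound
    have hstar : ∀ G ∈ M.powerset,
        G ∉ {G | t ≤ (exNum G H : ℝ)} → ((G ∩ T).card : ℝ) < t := by
      intro G hG hGA
      have hsub := Finset.mem_powerset.mp hG
      have hGT : G ∩ T = G.filter (fun e => z ∈ e) := by
        ext e
        simp only [hTdef, Finset.mem_inter, Finset.mem_filter]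
        exact ⟨fun h => ⟨h.1, h.2.2⟩, fun h => ⟨h.1, hsub h.1, h.2⟩⟩
      have hstar2 := star_le_exNum hne hint z G
      simp only [Set.mem_setOf_eq, not_le] at hGA
      rw [hGT]
      calc ((G.filter (fun e => z ∈ e)).card : ℝ) ≤ (exNum G H : ℝ) := by
            exact_mod_cast hstar2
        _ < t := hGA
    -- split probability
    have hsplit : prob n r (p n) {G | t ≤ (exNum G H : ℝ)}
        = 1 - ∑ G ∈ M.powerset, (if G ∉ {G | t ≤ (exNum G H : ℝ)}
            then p n ^ G.card * (1 - p n) ^ (M.card - G.card) else 0) := by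
      have hterm : ∀ G ∈ M.powerset,
          ((if G ∈ {G | t ≤ (exNum G H : ℝ)}
              then p n ^ G.card * (1 - p n) ^ (M.card - G.card) else 0)
            + (if G ∉ {G | t ≤ (exNum G H : ℝ)}
              then p n ^ G.card * (1 - p n) ^ (M.card - G.card) else 0))
          = p n ^ G.card * (1 - p n) ^ (M.card - G.card) := by
        intro G _
        by_cases h : G ∈ {G | t ≤ (exNum G H : ℝ)} <;> simp [h]
      rw [prob, eq_sub_iff_add_eq, ← hM, ← Finset.sum_add_distrib,
        Finset.sum_congr rfl hterm, sum_W (p n) M]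
    have hmono : ∑ G ∈ M.powerset, (if G ∉ {G | t ≤ (exNum G H : ℝ)}
          then p n ^ G.card * (1 - p n) ^ (M.card - G.card) else 0)
        ≤ ∑ G ∈ M.powerset, (if ((G ∩ T).card : ℝ) < t
            then p n ^ G.card * (1 - p n) ^ (M.card - G.card) else 0) := by
      apply Finset.sum_le_sum
      intro G hG
      by_cases h : G ∉ {G | t ≤ (exNum G H : ℝ)}
      · rw [if_pos h, if_pos (hstar G hG h)]
      · rw [if_neg h]
        split_ifs
        · exact mul_nonneg (pow_nonneg hp0.le _) (pow_nonneg (by linarith) _)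
        · exact le_rfl
    have hcheb := cheb_W (p n) hp0 hp1 M T hTsub hTpos t ht
    have hfinal : ∑ G ∈ M.powerset, (if G ∉ {G | t ≤ (exNum G H : ℝ)}
          then p n ^ G.card * (1 - p n) ^ (M.card - G.card) else 0)
        ≤ 4 / (N₀ n * p n) := by
      refine (hmono.trans hcheb).trans ?_
      gcongr
    rw [hsplit]
    linarith
  exact tendsto_of_tendsto_of_tendsto_of_le_of_le' hlim tendsto_const_nhds hlb
    (Filter.Eventually.of_forall hub)

end Paper
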